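/- Let (C, T, η, (-)*, Ω, σ, ω) be a let-ccc with a fixpoint object. Set ◇ = T, p = η, and for f : Y × TX → X define f† = f‡ ∘ (id_Y × ω) : Y → X. Then † satisfies the fixpoint identity, the parameter identity, the composition identity, and uniformity. -/

import Mathlib

open CategoryTheory CategoryTheory.Limits

universe v u

namespace LetCCC

variable {C : Type u} [Category.{v} C] [CartesianMonoidalCategory C]

section

variable (T : C → C) (η : ∀ A : C, A ⟶ T A)
  (star : ∀ {A B Z : C}, (A ⨯ B ⟶ T Z) → (A ⨯ T B ⟶ T Z))

/-- The action of the strong monad `T` on a morphism `g : Z ⟶ X` (regarding `g` as a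
morphism `1 × Z ⟶ X`): `T g = (η_X ∘ g)*`. -/
noncomputable def Tmap {Z X : C} (g : Z ⟶ X) : T Z ⟶ T X :=
  prod.lift (terminal.from (T Z)) (𝟙 (T Z)) ≫ star (prod.snd ≫ g ≫ η X)

variable (Ω : C) (dgr : ∀ {P A : C}, (P ⨯ T A ⟶ A) → (P ⨯ Ω ⟶ A)) (ω : ⊤_ C ⟶ Ω)

/-- The guarded fixpoint operator of a let-ccc with a fixpoint object:
`f† = f‡ ∘ (id_Y × ω) : Y ⟶ X` for `f : Y × TX ⟶ X` (here the delay `◇ = T` is written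
in the right-hand factor of the product). -/
noncomputable def dag {Y X : C} (f : Y ⨯ T X ⟶ X) : Y ⟶ X :=
  prod.lift (𝟙 Y) (terminal.from Y ≫ ω) ≫ dgr f

end

set_option maxHeartbeats 1000000 in
/-- **Let-ccc's with a fixpoint object are guarded fixpoint categories satisfying
(P), (C) and (U).**  Let `(C, T, η, (-)*, Ω, σ, ω)` be a let-ccc with a fixpoint object:
`C` is cartesian closed, `(T, η, (-)*)` is a strong monad in extension form, `σ : TΩ ⟶ Ω`
has the (parametrized) universal property that every `f : P × TA ⟶ A` admits a unique
`f‡ : P × Ω ⟶ A` with `f‡ ∘ (id × σ) = f ∘ ⟨π_ℓ, (η ∘ f‡)*⟩`, and `ω : 1 ⟶ Ω` is the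
unique fixpoint of `σ ∘ η_Ω`.  Then the operator `f† = f‡ ∘ (id_Y × ω)` satisfies the
fixpoint identity, the parameter identity, the composition identity and uniformity. -/
theorem letccc_dagger_properties [MonoidalClosed C]
    (T : C → C) (η : ∀ A : C, A ⟶ T A)
    (star : ∀ {A B Z : C}, (A ⨯ B ⟶ T Z) → (A ⨯ T B ⟶ T Z))
    -- (a)
    (ha : ∀ {A B Z : C} (f : A ⨯ B ⟶ T Z), prod.map (𝟙 A) (η B) ≫ star f = f)
    -- (b)
    (hb : ∀ {A B : C}, star (prod.snd ≫ η B) = (prod.snd : A ⨯ T B ⟶ T B))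
    -- (c)
    (hc : ∀ {A A' B Z : C} (f : A ⟶ A') (g : A' ⨯ B ⟶ T Z),
      star (prod.map f (𝟙 B) ≫ g) = prod.map f (𝟙 (T B)) ≫ star g)
    -- (d)
    (hd : ∀ {A B Z W : C} (f : A ⨯ B ⟶ T Z) (g : A ⨯ Z ⟶ T W),
      star (prod.lift prod.fst f ≫ star g) = prod.lift prod.fst (star f) ≫ star g)
    (Ω : C) (σ : T Ω ⟶ Ω)
    (dgr : ∀ {P A : C}, (P ⨯ T A ⟶ A) → (P ⨯ Ω ⟶ A))
    -- `dgr f = f‡` satisfies the defining square of the fixpoint object ...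
    (hdgr : ∀ {P A : C} (f : P ⨯ T A ⟶ A),
      prod.map (𝟙 P) σ ≫ dgr f = prod.lift prod.fst (star (dgr f ≫ η A)) ≫ f)
    -- ... and is the unique such morphism
    (hdgru : ∀ {P A : C} (f : P ⨯ T A ⟶ A) (u : P ⨯ Ω ⟶ A),
      prod.map (𝟙 P) σ ≫ u = prod.lift prod.fst (star (u ≫ η A)) ≫ f → u = dgr f)
    (ω : ⊤_ C ⟶ Ω)
    -- `ω` is the unique fixpoint of `σ ∘ η_Ω`
    (hω : ω ≫ η Ω ≫ σ = ω)
    (hωu : ∀ w : ⊤_ C ⟶ Ω, w ≫ η Ω ≫ σ = w → w = ω) :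
    -- (†) fixpoint identity
    (∀ (Y X : C) (f : Y ⨯ T X ⟶ X),
      dag T Ω dgr ω f = prod.lift (𝟙 Y) (dag T Ω dgr ω f ≫ η X) ≫ f) ∧
    -- (P) parameter identity
    (∀ (Y Z X : C) (f : Y ⨯ T X ⟶ X) (h : Z ⟶ Y),
      dag T Ω dgr ω (prod.map h (𝟙 (T X)) ≫ f) = h ≫ dag T Ω dgr ω f) ∧
    -- (C) composition identity
    (∀ (Y Z X : C) (f : Y ⨯ T X ⟶ Z) (g : Z ⟶ X),
      dag T Ω dgr ω (f ≫ g) =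
        dag T Ω dgr ω (prod.map (𝟙 Y) (Tmap T η star g) ≫ f) ≫ g) ∧
    -- (U) uniformity
    (∀ (Y X X' : C) (f : Y ⨯ T X ⟶ X) (g : Y ⨯ T X' ⟶ X') (h : X ⟶ X'),
      f ≫ h = prod.map (𝟙 Y) (Tmap T η star h) ≫ g →
        dag T Ω dgr ω f ≫ h = dag T Ω dgr ω g) := by
  -- unit naturality : η ≫ T h = h ≫ η
  have unit_nat : ∀ {Z X' : C} (h : Z ⟶ X'),
      η Z ≫ Tmap T η star h = h ≫ η X' := by
    intro Z X' h
    unfold Tmap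
    rw [← Category.assoc, prod.comp_lift]
    have e : prod.lift (η Z ≫ terminal.from (T Z)) (η Z ≫ 𝟙 (T Z)) =
        prod.lift (terminal.from Z) (𝟙 Z) ≫ prod.map (𝟙 _) (η Z) := by
      apply Limits.prod.hom_ext <;> simp
    rw [e, Category.assoc, ha]
    simp [prod.lift_fst, prod.lift_snd, prod.lift_fst_assoc, prod.lift_snd_assoc]
  -- u ≫ T h = ⟨π₁, u⟩ ≫ (π₂ ≫ h ≫ η)*
  have L0 : ∀ {A B Z X' : C} (u : A ⨯ B ⟶ T Z) (h : Z ⟶ X'),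
      u ≫ Tmap T η star h =
        prod.lift prod.fst u ≫ star (prod.snd ≫ h ≫ η X') := by
    intro A B Z X' u h
    unfold Tmap
    have e1 : star (prod.snd ≫ h ≫ η X' : A ⨯ Z ⟶ T X') =
        prod.map (terminal.from A) (𝟙 (T Z)) ≫
          star (prod.snd ≫ h ≫ η X' : (⊤_ C) ⨯ Z ⟶ T X') := by
      rw [← hc]
      congr 1
      simp
    have e2 : prod.lift (prod.fst : A ⨯ B ⟶ A) u ≫
          prod.map (terminal.from A) (𝟙 (T Z)) =
        u ≫ prod.lift (terminal.from (T Z)) (𝟙 (T Z)) := by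
      apply Limits.prod.hom_ext <;> simp
    rw [e1]
    simp only [← Category.assoc]
    rw [e2]
  -- (u)* ≫ T h = (u ≫ T h)*
  have L : ∀ {A B Z X' : C} (u : A ⨯ B ⟶ T Z) (h : Z ⟶ X'),
      star u ≫ Tmap T η star h = star (u ≫ Tmap T η star h) := by
    intro A B Z X' u h
    rw [L0 (star u) h, L0 u h, ← hd u (prod.snd ≫ h ≫ η X')]
  -- uniformity at the level of ‡
  have key_unif : ∀ {Y X X' : C} (f : Y ⨯ T X ⟶ X) (g : Y ⨯ T X' ⟶ X') (h : X ⟶ X'),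
      f ≫ h = prod.map (𝟙 Y) (Tmap T η star h) ≫ g → dgr f ≫ h = dgr g := by
    intro Y X X' f g h hfg
    apply hdgru
    rw [← Category.assoc, hdgr f, Category.assoc, hfg, ← Category.assoc,
      prod.lift_map, Category.comp_id]
    have e : star (dgr f ≫ η X) ≫ Tmap T η star h =
        star ((dgr f ≫ h) ≫ η X') := by
      rw [L (dgr f ≫ η X) h]
      congr 1
      rw [Category.assoc, unit_nat, ← Category.assoc]
    rw [e]
  -- fixpoint identity
  have fix : ∀ (Y X : C) (f : Y ⨯ T X ⟶ X),
      dag T Ω dgr ω f = prod.lift (𝟙 Y) (dag T Ω dgr ω f ≫ η X) ≫ f := by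
    intro Y X f
    have ddef : dag T Ω dgr ω f =
        prod.lift (𝟙 Y) (terminal.from Y ≫ ω) ≫ dgr f := rfl
    have h1 : prod.lift (𝟙 Y) (terminal.from Y ≫ ω ≫ η Ω) ≫ prod.map (𝟙 Y) σ =
        prod.lift (𝟙 Y) (terminal.from Y ≫ ω) := by
      apply Limits.prod.hom_ext
      · simp [prod.lift_fst, prod.lift_snd, prod.lift_fst_assoc, prod.lift_snd_assoc]
      · simp only [prod.map_snd, prod.lift_snd_assoc, Category.assoc]
        rw [hω]
        simp [prod.lift_fst, prod.lift_snd, prod.lift_fst_assoc, prod.lift_snd_assoc]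
    have h2 : prod.lift (𝟙 Y) (terminal.from Y ≫ ω ≫ η Ω) ≫
          prod.lift prod.fst (star (dgr f ≫ η X)) =
        prod.lift (𝟙 Y) (dag T Ω dgr ω f ≫ η X) := by
      rw [prod.comp_lift]
      apply Limits.prod.hom_ext
      · simp [prod.lift_fst, prod.lift_snd, prod.lift_fst_assoc, prod.lift_snd_assoc]
      · simp only [prod.lift_snd]
        have e : prod.lift (𝟙 Y) (terminal.from Y ≫ ω ≫ η Ω) =
            prod.lift (𝟙 Y) (terminal.from Y ≫ ω) ≫ prod.map (𝟙 Y) (η Ω) := by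
          apply Limits.prod.hom_ext <;> simp
        rw [e, Category.assoc, ha, ddef, Category.assoc]
    conv_lhs => rw [ddef, ← h1, Category.assoc, hdgr f, ← Category.assoc, h2]
  refine ⟨fix, ?_, ?_, ?_⟩
  · -- parameter identity
    intro Y Z X f h
    have c1 : prod.map h (𝟙 Ω) ≫ dgr f = dgr (prod.map h (𝟙 (T X)) ≫ f) := by
      apply hdgru
      have e1 : prod.map (𝟙 Z) σ ≫ prod.map h (𝟙 Ω) =
          prod.map h (𝟙 (T Ω)) ≫ prod.map (𝟙 Y) σ := by
        apply Limits.prod.hom_ext <;> simp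
      have e2 : star ((prod.map h (𝟙 Ω) ≫ dgr f) ≫ η X) =
          prod.map h (𝟙 (T Ω)) ≫ star (dgr f ≫ η X) := by
        rw [← hc]
        congr 1
        rw [Category.assoc]
      have e3 : prod.lift prod.fst (prod.map h (𝟙 (T Ω)) ≫ star (dgr f ≫ η X)) ≫
            prod.map h (𝟙 (T X)) =
          prod.map h (𝟙 (T Ω)) ≫ prod.lift prod.fst (star (dgr f ≫ η X)) := by
        apply Limits.prod.hom_ext <;> simp
      rw [← Category.assoc, e1, Category.assoc, hdgr f, e2]
      simp only [← Category.assoc]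
      rw [e3]
    have e4 : prod.lift (𝟙 Z) (terminal.from Z ≫ ω) ≫ prod.map h (𝟙 Ω) =
        h ≫ prod.lift (𝟙 Y) (terminal.from Y ≫ ω) := by
      apply Limits.prod.hom_ext
      · simp
      · simp only [prod.lift_snd, prod.map_snd, Category.comp_id, prod.lift_snd_assoc,
          prod.comp_lift]
        rw [← Category.assoc, terminal.comp_from]
        simp [prod.lift_fst, prod.lift_snd, prod.lift_fst_assoc, prod.lift_snd_assoc]
    show prod.lift (𝟙 Z) (terminal.from Z ≫ ω) ≫ dgr (prod.map h (𝟙 (T X)) ≫ f) =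
      h ≫ prod.lift (𝟙 Y) (terminal.from Y ≫ ω) ≫ dgr f
    rw [← c1, ← Category.assoc, e4, Category.assoc]
  · -- composition identity
    intro Y Z X f g
    have hfg : (prod.map (𝟙 Y) (Tmap T η star g) ≫ f) ≫ g =
        prod.map (𝟙 Y) (Tmap T η star g) ≫ (f ≫ g) := Category.assoc _ _ _
    have hk := key_unif (prod.map (𝟙 Y) (Tmap T η star g) ≫ f) (f ≫ g) g hfg
    show prod.lift (𝟙 Y) (terminal.from Y ≫ ω) ≫ dgr (f ≫ g) =
      (prod.lift (𝟙 Y) (terminal.from Y ≫ ω) ≫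
        dgr (prod.map (𝟙 Y) (Tmap T η star g) ≫ f)) ≫ g
    rw [Category.assoc, hk]
  · -- uniformity
    intro Y X X' f g h hfg
    have hk := key_unif f g h hfg
    show (prod.lift (𝟙 Y) (terminal.from Y ≫ ω) ≫ dgr f) ≫ h =
      prod.lift (𝟙 Y) (terminal.from Y ≫ ω) ≫ dgr g
    rw [Category.assoc, hk]

end LetCCC
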